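/- Let (f,g,ρ) be a warped Berger solution of Ricci flow on S^1×S^3 defined on [0,T) with T < ∞, and suppose that liminf_{t↗T} M̌(t) = 0. Then there exists a constant C < ∞ such that M̌(t)² ≤ C(T − t) for all t ∈ [0,T). -/

import Mathlib

open Real Set Filter Topology

noncomputable section

/-- Partial derivative in the first (spatial, `ξ`) variable. -/
def pd1 (φ : ℝ → ℝ → ℝ) (ξ t : ℝ) : ℝ := deriv (fun x => φ x t) ξ

/-- Partial derivative in the second (time) variable: `φ_t`. -/
def pdt (φ : ℝ → ℝ → ℝ) (ξ t : ℝ) : ℝ := deriv (fun τ => φ ξ τ) t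

/-- Derivative with respect to arclength `s` (where `ds = ρ dξ`): `φ_s := ρ⁻¹ ∂_ξ φ`. -/
def Ds (ρ φ : ℝ → ℝ → ℝ) (ξ t : ℝ) : ℝ := pd1 φ ξ t / ρ ξ t

/-- `M(ξ,t) := min {f(ξ,t), g(ξ,t)}`. -/
def M (f g : ℝ → ℝ → ℝ) (ξ t : ℝ) : ℝ := min (f ξ t) (g ξ t)

/-- `M̌(t) := min_{ξ ∈ S¹} M(ξ,t)`. -/
def Mcheck (f g : ℝ → ℝ → ℝ) (t : ℝ) : ℝ := ⨅ ξ : ℝ, M f g ξ t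

/-- A warped Berger solution of Ricci flow on `S¹ × S³` with (finite) existence time `T`:
smooth positive `2π`-periodic-in-`ξ` functions `f, g, ρ` on `S¹ × [0,T)` satisfying
  `f_t = f_ss + 2 (g_s/g) f_s − 2 f³/g⁴`,
  `g_t = g_ss + (f_s/f + g_s/g) g_s + 2 (f² − 2g²)/g³`,
  `(log ρ)_t = f_ss/f + 2 g_ss/g`. -/
structure WarpedBerger (T : ℝ) (f g ρ : ℝ → ℝ → ℝ) : Prop where
  T_pos : 0 < T
  f_pos : ∀ ξ t : ℝ, 0 ≤ t → t < T → 0 < f ξ t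
  g_pos : ∀ ξ t : ℝ, 0 ≤ t → t < T → 0 < g ξ t
  ρ_pos : ∀ ξ t : ℝ, 0 ≤ t → t < T → 0 < ρ ξ t
  f_per : ∀ ξ t : ℝ, f (ξ + 2 * π) t = f ξ t
  g_per : ∀ ξ t : ℝ, g (ξ + 2 * π) t = g ξ t
  ρ_per : ∀ ξ t : ℝ, ρ (ξ + 2 * π) t = ρ ξ t
  smooth : ContDiffOn ℝ (⊤ : ℕ∞)
      (fun p : ℝ × ℝ => (f p.1 p.2, g p.1 p.2, ρ p.1 p.2)) (Set.univ ×ˢ Set.Ico 0 T)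
  eq_f : ∀ ξ t : ℝ, 0 < t → t < T →
    pdt f ξ t = Ds ρ (Ds ρ f) ξ t + 2 * (Ds ρ g ξ t / g ξ t) * Ds ρ f ξ t
      - 2 * (f ξ t) ^ 3 / (g ξ t) ^ 4
  eq_g : ∀ ξ t : ℝ, 0 < t → t < T →
    pdt g ξ t = Ds ρ (Ds ρ g) ξ t
      + (Ds ρ f ξ t / f ξ t + Ds ρ g ξ t / g ξ t) * Ds ρ g ξ t
      + 2 * ((f ξ t) ^ 2 - 2 * (g ξ t) ^ 2) / (g ξ t) ^ 3
  eq_ρ : ∀ ξ t : ℝ, 0 < t → t < T →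
    pdt (fun x τ => Real.log (ρ x τ)) ξ t
      = Ds ρ (Ds ρ f) ξ t / f ξ t + 2 * (Ds ρ (Ds ρ g) ξ t / g ξ t)



/-- Min of a continuous periodic function is attained on `[0, 2π]`. -/
lemma exists_min_periodic {φ : ℝ → ℝ} (hc : Continuous φ) (hp : ∀ x, φ (x + 2*π) = φ x) :
    ∃ x ∈ Icc 0 (2*π), ∀ y, φ x ≤ φ y := by
  have h2π : (0:ℝ) < 2*π := by positivity
  obtain ⟨x, hx, hmin⟩ := isCompact_Icc.exists_isMinOn (⟨0, by constructor <;> [rfl; positivity]⟩ :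
    (Icc (0:ℝ) (2*π)).Nonempty) hc.continuousOn
  refine ⟨x, hx, fun y => ?_⟩
  obtain ⟨z, hz, hyz⟩ := (show Function.Periodic φ (2*π) from hp).exists_mem_Ico₀ h2π y
  rw [hyz]
  exact hmin (Ico_subset_Icc_self hz)

/-- Second derivative is nonnegative at a global minimum of a smooth function. -/
lemma deriv2_nonneg_at_min {φ : ℝ → ℝ} (hφ : ContDiff ℝ (⊤:ℕ∞) φ) {x : ℝ}
    (hmin : ∀ y, φ x ≤ φ y) : 0 ≤ deriv (deriv φ) x := by
  have hloc : IsLocalMin φ x := Filter.Eventually.of_forall hmin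
  have hd1 : deriv φ x = 0 := hloc.deriv_eq_zero
  have hdiff : Differentiable ℝ φ := hφ.differentiable (by simp)
  have hdd : ContDiff ℝ (⊤:ℕ∞) (deriv φ) := (contDiff_infty_iff_deriv.mp hφ).2
  by_contra hneg
  push_neg at hneg
  -- deriv φ has negative derivative at x and vanishes at x, so deriv φ < 0 just right of x
  have hslope : Tendsto (slope (deriv φ) x) (𝓝[≠] x) (𝓝 (deriv (deriv φ) x)) :=
    hasDerivAt_iff_tendsto_slope.mp ((hdd.differentiable (by simp)) x).hasDerivAt
  have hslope' : ∀ᶠ z in 𝓝[>] x, slope (deriv φ) x z < 0 :=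
    (hslope.mono_left (nhdsWithin_mono x (fun z hz => ne_of_gt hz))).eventually
      (eventually_lt_nhds hneg)
  have hneg' : ∀ᶠ z in 𝓝[>] x, deriv φ z < 0 := by
    filter_upwards [hslope', self_mem_nhdsWithin] with z hz hz'
    have hzx : 0 < z - x := sub_pos.mpr hz'
    rw [slope_def_field, hd1, sub_zero, div_neg_iff] at hz
    rcases hz with ⟨h1, h2⟩ | ⟨h1, h2⟩
    · linarith
    · exact h1
  obtain ⟨δ, hδ, hδ'⟩ := (nhdsGT_basis x).eventually_iff.mp hneg'
  have hanti : StrictAntiOn φ (Icc x δ) := by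
    apply strictAntiOn_of_deriv_neg (convex_Icc _ _) hdiff.continuous.continuousOn
    intro z hz
    rw [interior_Icc] at hz
    exact hδ' ⟨hz.1, hz.2⟩
  have hxδ : x < (x + δ)/2 := by linarith
  have hmem : (x + δ)/2 ∈ Icc x δ := ⟨by linarith, by linarith⟩
  have := hanti (left_mem_Icc.mpr (le_of_lt hδ)) hmem hxδ
  exact absurd (hmin ((x + δ)/2)) (not_le.mpr this)


/-- Key comparison lemma: if `ψ` is continuous on `[a,b]` and at each `t'' ∈ (a,b]` there is a
function `φ` differentiable at `t''` with derivative `≥ -C`, touching `ψ` from above at `t''`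
(i.e. `φ t'' = ψ t''` and `ψ ≤ φ` on `(a, t'')`), then `ψ a ≤ ψ b + C (b - a)`. -/
lemma key_mono {ψ : ℝ → ℝ} {C a b : ℝ} (hab : a ≤ b)
    (hcont : ContinuousOn ψ (Icc a b))
    (hslope : ∀ t'' ∈ Ioc a b, ∃ φ d, HasDerivAt φ d t'' ∧ φ t'' = ψ t'' ∧
      (∀ t ∈ Ioo a t'', ψ t ≤ φ t) ∧ -C ≤ d) :
    ψ a ≤ ψ b + C * (b - a) := by
  rcases eq_or_lt_of_le hab with rfl | hab'
  · simp
  -- reflected function F u = ψ (a + b - u)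
  set F : ℝ → ℝ := fun u => ψ (a + b - u) with hF
  have hσ : ∀ u, a + b - u ∈ Icc a b ↔ u ∈ Icc a b := by
    intro u; constructor <;> intro h <;> exact ⟨by linarith [h.2], by linarith [h.1]⟩
  have hFc : ContinuousOn F (Icc a b) := by
    apply hcont.comp (Continuous.continuousOn (by continuity))
    intro u hu; exact (hσ u).mpr hu
  have key : ∀ x ∈ Icc a b, F x ≤ ψ b + C * (x - a) := by
    apply image_le_of_liminf_slope_right_le_deriv_boundary hFc
    · simp [hF]
    · exact (continuous_const.add (continuous_const.mul (continuous_id.sub continuous_const))).continuousOn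
    · intro x _
      exact ((hasDerivWithinAt_id x (Ici x)).sub_const a).const_mul C |>.const_add (ψ b)
    · -- slope bound
      intro u hu r hr
      set t'' : ℝ := a + b - u with ht''
      have ht''mem : t'' ∈ Ioc a b := ⟨by simp [ht'']; linarith [hu.2], by simp [ht'']; linarith [hu.1]⟩
      obtain ⟨φ, d, hφd, hφeq, hφge, hdC⟩ := hslope t'' ht''mem
      -- slopes of φ at t'' from the left are eventually > -r
      have hts : Tendsto (slope φ t'') (𝓝[≠] t'') (𝓝 d) := hasDerivAt_iff_tendsto_slope.mp hφd
      have hts' : ∀ᶠ t in 𝓝[<] t'', slope φ t'' t > -r :=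
        ((hts.mono_left (nhdsWithin_mono _ (fun z hz => ne_of_lt hz))).eventually
          (eventually_gt_nhds (by linarith : -r < d)))
      have hIoo : Ioo a t'' ∈ 𝓝[<] t'' := Ioo_mem_nhdsLT_of_mem ⟨ht''mem.1, le_refl _⟩
      have hev : ∀ᶠ t in 𝓝[<] t'', slope F u (a + b - t) < r := by
        filter_upwards [hts', hIoo] with t hslope_t ht
        have htt : t < t'' := ht.2
        have h1 : ψ t ≤ φ t := hφge t ht
        -- slope φ t'' t = (φ t - φ t'')/(t - t'') > -r, with t - t'' < 0
        rw [slope_def_field] at hslope_t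
        have hd : t - t'' < 0 := by linarith
        have h2 : φ t - φ t'' < -r * (t - t'') := by
          rw [gt_iff_lt, lt_div_iff_of_neg hd] at hslope_t
          exact hslope_t
        -- hence ψ t - ψ t'' < r (t'' - t)
        have h3 : ψ t - ψ t'' < r * (t'' - t) := by
          rw [← hφeq]; nlinarith
        have hz : a + b - t - u = t'' - t := by rw [ht'']; ring
        rw [slope_def_field]
        have hF1 : F (a + b - t) = ψ t := by simp [hF]
        have hF2 : F u = ψ t'' := by simp [hF, ← ht'']
        rw [hF1, hF2, hz, div_lt_iff₀ (by linarith : (0:ℝ) < t'' - t)]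
        linarith
      -- transfer to 𝓝[>] u via the reflection z ↦ a + b - z
      have hmap : Tendsto (fun z : ℝ => a + b - z) (𝓝[>] u) (𝓝[<] t'') := by
        apply tendsto_nhdsWithin_of_tendsto_nhds_of_eventually_within
        · have : Tendsto (fun z : ℝ => a + b - z) (𝓝 u) (𝓝 (a + b - u)) := by
            exact (continuous_const.sub continuous_id).tendsto u
          exact this.mono_left nhdsWithin_le_nhds
        · filter_upwards [self_mem_nhdsWithin] with z hz
          simp only [mem_Iio, ht'']; linarith [mem_Ioi.mp hz]
      have : ∀ᶠ z in 𝓝[>] u, slope F u (a + b - (a + b - z)) < r := hmap.eventually hev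
      apply Filter.Eventually.frequently
      filter_upwards [this] with z hz
      simpa using hz
  have := key b (right_mem_Icc.mpr hab)
  simpa [hF] using this

lemma iInf_eq_min {φ : ℝ → ℝ} (hc : Continuous φ) (hp : ∀ x, φ (x + 2*π) = φ x) :
    ∃ x ∈ Icc 0 (2*π), (⨅ y, φ y) = φ x ∧ ∀ y, φ x ≤ φ y := by
  obtain ⟨x, hx, hmin⟩ := exists_min_periodic hc hp
  refine ⟨x, hx, le_antisymm (ciInf_le ⟨φ x, ?_⟩ x) (le_ciInf hmin), hmin⟩
  rintro v ⟨y, rfl⟩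
  exact hmin y

/-- Continuity of a parametrized minimum. -/
lemma cont_iInf {Φ : ℝ → ℝ → ℝ} {T a b : ℝ} (ha : 0 ≤ a) (hb : b < T)
    (hΦ : ContinuousOn (fun p : ℝ × ℝ => Φ p.1 p.2) (univ ×ˢ Ico 0 T))
    (hmin : ∀ t ∈ Icc a b, ∃ x ∈ Icc 0 (2*π), (⨅ y, Φ y t) = Φ x t ∧ ∀ y, Φ x t ≤ Φ y t) :
    ContinuousOn (fun t => ⨅ y, Φ y t) (Icc a b) := by
  have hK : IsCompact ((Icc (0:ℝ) (2*π)) ×ˢ (Icc a b)) := isCompact_Icc.prod isCompact_Icc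
  have hKsub : (Icc (0:ℝ) (2*π)) ×ˢ (Icc a b) ⊆ univ ×ˢ Ico 0 T := by
    rintro ⟨x, t⟩ ⟨_, ht⟩
    exact ⟨trivial, ⟨le_trans ha ht.1, lt_of_le_of_lt ht.2 hb⟩⟩
  have hUC := hK.uniformContinuousOn_of_continuous (hΦ.mono hKsub)
  rw [Metric.uniformContinuousOn_iff] at hUC
  intro t₀ ht₀
  rw [Metric.continuousWithinAt_iff]
  intro ε hε
  obtain ⟨δ, hδ, hδ'⟩ := hUC ε hε
  refine ⟨δ, hδ, fun {t} ht hd => ?_⟩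
  obtain ⟨x, hx, hx1, hx2⟩ := hmin t ht
  obtain ⟨x₀, hx₀, hx₀1, hx₀2⟩ := hmin t₀ ht₀
  have key : ∀ y ∈ Icc (0:ℝ) (2*π), dist (Φ y t) (Φ y t₀) < ε := by
    intro y hy
    apply hδ' (y, t) ⟨hy, ht⟩ (y, t₀) ⟨hy, ht₀⟩
    rw [Prod.dist_eq]
    simp only [dist_self]
    rw [max_eq_right dist_nonneg]
    exact hd
  have k1 := abs_sub_lt_iff.mp (Real.dist_eq _ _ ▸ key x hx)
  have k2 := abs_sub_lt_iff.mp (Real.dist_eq _ _ ▸ key x₀ hx₀)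
  rw [hx1, hx₀1, Real.dist_eq, abs_sub_lt_iff]
  constructor
  · linarith [hx2 x₀, k2.1]
  · linarith [hx₀2 x, k1.2]

variable {T : ℝ} {f g ρ : ℝ → ℝ → ℝ}

lemma slice_contDiff (hf : ContDiffOn ℝ (⊤:ℕ∞) (fun p : ℝ×ℝ => f p.1 p.2) (univ ×ˢ Ico 0 T))
    {t : ℝ} (h0 : 0 < t) (hT : t < T) : ContDiff ℝ (⊤:ℕ∞) (fun x => f x t) := by
  rw [← contDiffOn_univ]
  have h2 : ContDiffOn ℝ (⊤:ℕ∞) (fun p : ℝ×ℝ => f p.1 p.2) (univ ×ˢ Ioo 0 T) :=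
    hf.mono (prod_mono_right Ioo_subset_Ico_self)
  exact h2.comp ((contDiff_id.prodMk contDiff_const).contDiffOn)
    (fun x _ => ⟨trivial, h0, hT⟩)

lemma tslice_diff (hf : ContDiffOn ℝ (⊤:ℕ∞) (fun p : ℝ×ℝ => f p.1 p.2) (univ ×ˢ Ico 0 T))
    {ξ t : ℝ} (h0 : 0 < t) (hT : t < T) : DifferentiableAt ℝ (fun τ => f ξ τ) t := by
  have hnb : (univ ×ˢ Ico 0 T : Set (ℝ×ℝ)) ∈ 𝓝 (ξ, t) := by
    have h1 : (univ ×ˢ Ioo 0 T : Set (ℝ×ℝ)) ∈ 𝓝 (ξ,t) :=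
      (isOpen_univ.prod isOpen_Ioo).mem_nhds ⟨trivial, h0, hT⟩
    exact mem_of_superset h1 (prod_mono_right Ioo_subset_Ico_self)
  have h1 : ContDiffAt ℝ (⊤:ℕ∞) (fun p : ℝ×ℝ => f p.1 p.2) (ξ, t) := hf.contDiffAt hnb
  have h2 : ContDiffAt ℝ (⊤:ℕ∞) (fun τ : ℝ => ((ξ, τ) : ℝ×ℝ)) t :=
    (contDiff_const.prodMk contDiff_id).contDiffAt
  exact (h1.comp t h2).differentiableAt (by simp)

lemma DsDs_sign (hf : ContDiffOn ℝ (⊤:ℕ∞) (fun p : ℝ×ℝ => f p.1 p.2) (univ ×ˢ Ico 0 T))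
    (hρ : ContDiffOn ℝ (⊤:ℕ∞) (fun p : ℝ×ℝ => ρ p.1 p.2) (univ ×ˢ Ico 0 T))
    {ξ t : ℝ} (h0 : 0 < t) (hT : t < T) (hρpos : 0 < ρ ξ t)
    (hcrit : deriv (fun x => f x t) ξ = 0) :
    Ds ρ (Ds ρ f) ξ t = deriv (deriv (fun x => f x t)) ξ * ρ ξ t / (ρ ξ t)^2 / ρ ξ t := by
  have hfs := slice_contDiff hf h0 hT
  have hρs := slice_contDiff hρ h0 hT
  have hd1 : DifferentiableAt ℝ (deriv (fun x => f x t)) ξ :=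
    ((contDiff_infty_iff_deriv.mp hfs).2.differentiable (by simp)).differentiableAt
  have hdρ : DifferentiableAt ℝ (fun x => ρ x t) ξ :=
    (hρs.differentiable (by simp)).differentiableAt
  simp only [Ds, pd1]
  rw [deriv_fun_div hd1 hdρ (ne_of_gt hρpos), hcrit]
  ring

lemma pdt_f_lower (sol : WarpedBerger T f g ρ) {ξ t : ℝ} (h0 : 0 < t) (hT : t < T)
    (hmin : ∀ y, f ξ t ≤ f y t) (hfg : f ξ t ≤ g ξ t) :
    -4 ≤ 2 * f ξ t * pdt f ξ t := by
  have hfp := sol.f_pos ξ t h0.le hT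
  have hgp := sol.g_pos ξ t h0.le hT
  have hρp := sol.ρ_pos ξ t h0.le hT
  have hfsm := sol.smooth.fst
  have hρsm := sol.smooth.snd.snd
  have hfs := slice_contDiff hfsm h0 hT
  have hlm : IsLocalMin (fun x => f x t) ξ := Filter.Eventually.of_forall hmin
  have hcrit : deriv (fun x => f x t) ξ = 0 := hlm.deriv_eq_zero
  have hd2 : 0 ≤ deriv (deriv (fun x => f x t)) ξ := deriv2_nonneg_at_min hfs hmin
  have hDs0 : Ds ρ f ξ t = 0 := by simp [Ds, pd1, hcrit]
  have hDsDs : 0 ≤ Ds ρ (Ds ρ f) ξ t := by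
    rw [DsDs_sign hfsm hρsm h0 hT hρp hcrit]
    positivity
  have heq := sol.eq_f ξ t h0 hT
  have expand : 2 * f ξ t * pdt f ξ t
      = 2 * f ξ t * Ds ρ (Ds ρ f) ξ t - 4 * (f ξ t ^ 4 / g ξ t ^ 4) := by
    rw [heq, hDs0]; ring
  have h1 : 0 ≤ 2 * f ξ t * Ds ρ (Ds ρ f) ξ t := by positivity
  have h4 : f ξ t ^ 4 ≤ g ξ t ^ 4 := pow_le_pow_left₀ hfp.le hfg 4
  have h2 : f ξ t ^ 4 / g ξ t ^ 4 ≤ 1 := by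
    rw [div_le_one (by positivity)]; exact h4
  rw [expand]; linarith

lemma pdt_g_lower (sol : WarpedBerger T f g ρ) {ξ t : ℝ} (h0 : 0 < t) (hT : t < T)
    (hmin : ∀ y, g ξ t ≤ g y t) (hfg : g ξ t ≤ f ξ t) :
    -4 ≤ 2 * g ξ t * pdt g ξ t := by
  have hfp := sol.f_pos ξ t h0.le hT
  have hgp := sol.g_pos ξ t h0.le hT
  have hρp := sol.ρ_pos ξ t h0.le hT
  have hgsm := sol.smooth.snd.fst
  have hρsm := sol.smooth.snd.snd
  have hgs := slice_contDiff hgsm h0 hT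
  have hlm : IsLocalMin (fun x => g x t) ξ := Filter.Eventually.of_forall hmin
  have hcrit : deriv (fun x => g x t) ξ = 0 := hlm.deriv_eq_zero
  have hd2 : 0 ≤ deriv (deriv (fun x => g x t)) ξ := deriv2_nonneg_at_min hgs hmin
  have hDs0 : Ds ρ g ξ t = 0 := by simp [Ds, pd1, hcrit]
  have hDsDs : 0 ≤ Ds ρ (Ds ρ g) ξ t := by
    rw [DsDs_sign hgsm hρsm h0 hT hρp hcrit]
    positivity
  have heq := sol.eq_g ξ t h0 hT
  have hg0 : g ξ t ≠ 0 := ne_of_gt hgp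
  have expand : 2 * g ξ t * pdt g ξ t
      = 2 * g ξ t * Ds ρ (Ds ρ g) ξ t + 4 * ((f ξ t ^ 2 - 2 * g ξ t ^ 2) / g ξ t ^ 2) := by
    rw [heq, hDs0]
    field_simp
    ring
  have h1 : 0 ≤ 2 * g ξ t * Ds ρ (Ds ρ g) ξ t := by positivity
  have hsq : g ξ t ^ 2 ≤ f ξ t ^ 2 := pow_le_pow_left₀ hgp.le hfg 2
  have h2 : -1 ≤ (f ξ t ^ 2 - 2 * g ξ t ^ 2) / g ξ t ^ 2 := by
    rw [le_div_iff₀ (by positivity : (0:ℝ) < g ξ t ^ 2)]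
    linarith
  rw [expand]; linarith

lemma pdt_f_upper (sol : WarpedBerger T f g ρ) {ξ t : ℝ} (h0 : 0 < t) (hT : t < T)
    (hmax : ∀ y, f y t ≤ f ξ t) :
    pdt f ξ t ≤ 0 := by
  have hfp := sol.f_pos ξ t h0.le hT
  have hgp := sol.g_pos ξ t h0.le hT
  have hρp := sol.ρ_pos ξ t h0.le hT
  have hfsm := sol.smooth.fst
  have hρsm := sol.smooth.snd.snd
  have hfs := slice_contDiff hfsm h0 hT
  have hlm : IsLocalMax (fun x => f x t) ξ := Filter.Eventually.of_forall hmax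
  have hcrit : deriv (fun x => f x t) ξ = 0 := hlm.deriv_eq_zero
  have hnegmin : ∀ y, (fun x => -f x t) ξ ≤ (fun x => -f x t) y := fun y => neg_le_neg (hmax y)
  have hd2neg := deriv2_nonneg_at_min hfs.neg hnegmin
  have e1 : deriv (fun x => -f x t) = fun x => -deriv (fun y => f y t) x := by
    funext x
    exact deriv.neg
  have hd2 : deriv (deriv (fun x => f x t)) ξ ≤ 0 := by
    rw [e1] at hd2neg
    have e2 : deriv (fun x => -deriv (fun y => f y t) x) ξ = -deriv (deriv (fun y => f y t)) ξ :=
      deriv.neg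
    rw [e2] at hd2neg
    linarith
  have hDs0 : Ds ρ f ξ t = 0 := by simp [Ds, pd1, hcrit]
  have hDsDs : Ds ρ (Ds ρ f) ξ t ≤ 0 := by
    rw [DsDs_sign hfsm hρsm h0 hT hρp hcrit]
    apply div_nonpos_of_nonpos_of_nonneg _ hρp.le
    apply div_nonpos_of_nonpos_of_nonneg _ (by positivity)
    exact mul_nonpos_of_nonpos_of_nonneg hd2 hρp.le
  have heq := sol.eq_f ξ t h0 hT
  have expand : pdt f ξ t = Ds ρ (Ds ρ f) ξ t - 2 * f ξ t ^ 3 / g ξ t ^ 4 := by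
    rw [heq, hDs0]; ring
  have hpos : 0 ≤ 2 * f ξ t ^ 3 / g ξ t ^ 4 := by positivity
  rw [expand]; linarith

lemma slice_cont_f (sol : WarpedBerger T f g ρ) {t : ℝ} (h0 : 0 ≤ t) (hT : t < T) :
    Continuous (fun x => f x t) := by
  rw [← continuousOn_univ]
  apply (sol.smooth.fst.continuousOn).comp (continuous_id.prodMk continuous_const).continuousOn
  intro x _; exact ⟨trivial, h0, hT⟩

lemma slice_cont_g (sol : WarpedBerger T f g ρ) {t : ℝ} (h0 : 0 ≤ t) (hT : t < T) :
    Continuous (fun x => g x t) := by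
  rw [← continuousOn_univ]
  apply (sol.smooth.snd.fst.continuousOn).comp
    (continuous_id.prodMk continuous_const).continuousOn
  intro x _; exact ⟨trivial, h0, hT⟩

lemma M_contOn (sol : WarpedBerger T f g ρ) :
    ContinuousOn (fun p : ℝ×ℝ => M f g p.1 p.2) (univ ×ˢ Ico 0 T) :=
  (sol.smooth.fst.continuousOn).inf (sol.smooth.snd.fst.continuousOn)

lemma Mcheck_spec (sol : WarpedBerger T f g ρ) {t : ℝ} (h0 : 0 ≤ t) (hT : t < T) :
    ∃ x ∈ Icc 0 (2*π), Mcheck f g t = M f g x t ∧ ∀ y, M f g x t ≤ M f g y t := by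
  have hc : Continuous (fun x => M f g x t) :=
    (slice_cont_f sol h0 hT).min (slice_cont_g sol h0 hT)
  have hp : ∀ x, M f g (x + 2*π) t = M f g x t := fun x => by
    simp [M, sol.f_per, sol.g_per]
  exact iInf_eq_min hc hp

lemma Mcheck_pos (sol : WarpedBerger T f g ρ) {t : ℝ} (h0 : 0 ≤ t) (hT : t < T) :
    0 < Mcheck f g t := by
  obtain ⟨x, _, heq, _⟩ := Mcheck_spec sol h0 hT
  rw [heq]
  exact lt_min (sol.f_pos x t h0 hT) (sol.g_pos x t h0 hT)

lemma Mcheck_contOn (sol : WarpedBerger T f g ρ) {a b : ℝ} (ha : 0 ≤ a) (hb : b < T) :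
    ContinuousOn (Mcheck f g) (Icc a b) := by
  apply cont_iInf ha hb (M_contOn sol)
  intro t ht
  exact Mcheck_spec sol (ha.trans ht.1) (lt_of_le_of_lt ht.2 hb)

lemma Gmin_spec (sol : WarpedBerger T f g ρ) {t : ℝ} (h0 : 0 ≤ t) (hT : t < T) :
    ∃ x ∈ Icc 0 (2*π), (⨅ y, -f y t) = -f x t ∧ ∀ y, -f x t ≤ -f y t := by
  have hc : Continuous (fun x => -f x t) := (slice_cont_f sol h0 hT).neg
  have hp : ∀ x, -f (x + 2*π) t = -f x t := fun x => by rw [sol.f_per]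
  exact iInf_eq_min hc hp

lemma Gmin_contOn (sol : WarpedBerger T f g ρ) {a b : ℝ} (ha : 0 ≤ a) (hb : b < T) :
    ContinuousOn (fun t => ⨅ y, -f y t) (Icc a b) := by
  apply cont_iInf ha hb (sol.smooth.fst.continuousOn).neg
  intro t ht
  exact Gmin_spec sol (ha.trans ht.1) (lt_of_le_of_lt ht.2 hb)

/-- At each interior time there is an upper barrier for `Mcheck²` with derivative `≥ -4`. -/
lemma pkg_min (sol : WarpedBerger T f g ρ) {t'' : ℝ} (h0 : 0 < t'') (hT : t'' < T) :
    ∃ φ d, HasDerivAt φ d t'' ∧ φ t'' = (Mcheck f g t'')^2 ∧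
      (∀ s, 0 ≤ s → s < T → (Mcheck f g s)^2 ≤ φ s) ∧ -4 ≤ d := by
  obtain ⟨x, _, heq, hmin⟩ := Mcheck_spec sol h0.le hT
  by_cases hfg : f x t'' ≤ g x t''
  · have hMx : M f g x t'' = f x t'' := min_eq_left hfg
    have hfmin : ∀ y, f x t'' ≤ f y t'' := fun y =>
      le_trans (le_of_eq hMx.symm) ((hmin y).trans (min_le_left _ _))
    have hdiff : DifferentiableAt ℝ (fun τ => f x τ) t'' := tslice_diff sol.smooth.fst h0 hT
    have h1 : HasDerivAt (fun τ => f x τ) (pdt f x t'') t'' := hdiff.hasDerivAt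
    have h2 : HasDerivAt (fun τ => (f x τ)^2) (((2:ℕ):ℝ) * f x t'' ^ (2 - 1) * pdt f x t'') t'' :=
      h1.fun_pow 2
    refine ⟨fun τ => (f x τ)^2, 2 * f x t'' * pdt f x t'', ?_, ?_, ?_, ?_⟩
    · convert h2 using 1
      norm_num
    · rw [heq, hMx]
    · intro s hs0 hsT
      obtain ⟨z, _, hz1, hz2⟩ := Mcheck_spec sol hs0 hsT
      have hle : Mcheck f g s ≤ f x s := by
        rw [hz1]
        exact (hz2 x).trans (min_le_left _ _)
      exact pow_le_pow_left₀ (Mcheck_pos sol hs0 hsT).le hle 2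
    · exact pdt_f_lower sol h0 hT hfmin hfg
  · push_neg at hfg
    have hMx : M f g x t'' = g x t'' := min_eq_right hfg.le
    have hgmin : ∀ y, g x t'' ≤ g y t'' := fun y =>
      le_trans (le_of_eq hMx.symm) ((hmin y).trans (min_le_right _ _))
    have hdiff : DifferentiableAt ℝ (fun τ => g x τ) t'' := tslice_diff sol.smooth.snd.fst h0 hT
    have h1 : HasDerivAt (fun τ => g x τ) (pdt g x t'') t'' := hdiff.hasDerivAt
    have h2 : HasDerivAt (fun τ => (g x τ)^2) (((2:ℕ):ℝ) * g x t'' ^ (2 - 1) * pdt g x t'') t'' :=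
      h1.fun_pow 2
    refine ⟨fun τ => (g x τ)^2, 2 * g x t'' * pdt g x t'', ?_, ?_, ?_, ?_⟩
    · convert h2 using 1
      norm_num
    · rw [heq, hMx]
    · intro s hs0 hsT
      obtain ⟨z, _, hz1, hz2⟩ := Mcheck_spec sol hs0 hsT
      have hle : Mcheck f g s ≤ g x s := by
        rw [hz1]
        exact (hz2 x).trans (min_le_right _ _)
      exact pow_le_pow_left₀ (Mcheck_pos sol hs0 hsT).le hle 2
    · exact pdt_g_lower sol h0 hT hgmin hfg.le

/-- At each interior time there is an upper barrier for `⨅ y, -f y t` with derivative `≥ 0`. -/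
lemma pkg_max (sol : WarpedBerger T f g ρ) {t'' : ℝ} (h0 : 0 < t'') (hT : t'' < T) :
    ∃ φ d, HasDerivAt φ d t'' ∧ φ t'' = (⨅ y, -f y t'') ∧
      (∀ s, 0 ≤ s → s < T → (⨅ y, -f y s) ≤ φ s) ∧ 0 ≤ d := by
  obtain ⟨x, _, heq, hmin⟩ := Gmin_spec sol h0.le hT
  have hmax : ∀ y, f y t'' ≤ f x t'' := fun y => by linarith [hmin y]
  have hdiff : DifferentiableAt ℝ (fun τ => f x τ) t'' := tslice_diff sol.smooth.fst h0 hT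
  have h1 : HasDerivAt (fun τ => f x τ) (pdt f x t'') t'' := hdiff.hasDerivAt
  refine ⟨fun τ => -f x τ, -pdt f x t'', h1.neg, heq.symm, ?_, ?_⟩
  · intro s hs0 hsT
    obtain ⟨z, _, hz1, hz2⟩ := Gmin_spec sol hs0 hsT
    rw [hz1]
    exact hz2 x
  · linarith [pdt_f_upper sol h0 hT hmax]


/-- If the smallest radius `M̌(t)` tends to zero along some sequence of
times approaching the finite time `T`, then `M̌(t)² ≤ C (T − t)` for a uniform constant `C`. -/
theorem neck_radius_upper_bound (T : ℝ) (f g ρ : ℝ → ℝ → ℝ)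
    (sol : WarpedBerger T f g ρ)
    (hM : Filter.liminf (fun t => Mcheck f g t) (𝓝[<] T) = 0) :
    ∃ C : ℝ, ∀ t : ℝ, 0 ≤ t → t < T → (Mcheck f g t) ^ 2 ≤ C * (T - t) := by
  
  refine ⟨4, fun t ht htT => ?_⟩
  -- Step 1: `Gm = ⨅ y, -f y ·` is nondecreasing, hence `Mcheck` is bounded above.
  set Gm : ℝ → ℝ := fun s => ⨅ y, -f y s with hGm
  have hGmono : ∀ s, 0 ≤ s → s < T → Gm 0 ≤ Gm s := by
    intro s hs0 hsT
    have := key_mono (ψ := Gm) (C := 0) (a := 0) (b := s) hs0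
      (Gmin_contOn sol le_rfl hsT) ?_
    · simpa using this
    · intro t'' ht''
      obtain ⟨φ, d, h1, h2, h3, h4⟩ := pkg_max sol ht''.1 (lt_of_le_of_lt ht''.2 hsT)
      exact ⟨φ, d, h1, h2, fun u hu => h3 u hu.1.le
        (lt_of_lt_of_le hu.2 (ht''.2.trans hsT.le)), by linarith⟩
  have hMbdd : ∀ s, 0 ≤ s → s < T → Mcheck f g s ≤ -(Gm 0) := by
    intro s hs0 hsT
    obtain ⟨z, _, hz1, hz2⟩ := Mcheck_spec sol hs0 hsT
    obtain ⟨w, _, hw1, hw2⟩ := Gmin_spec sol hs0 hsT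
    have h1 : Mcheck f g s ≤ f 0 s := by
      rw [hz1]; exact (hz2 0).trans (min_le_left _ _)
    have h2 : Gm s ≤ -f 0 s := by show (⨅ y, -f y s) ≤ -f 0 s; rw [hw1]; exact hw2 0
    have h3 := hGmono s hs0 hsT
    linarith
  -- Step 2: frequent smallness of Mcheck near T.
  have hnb : Ico 0 T ∈ 𝓝[<] T := Ico_mem_nhdsLT_of_mem ⟨sol.T_pos, le_rfl⟩
  have hfreq : ∀ ε > 0, ∃ᶠ s in 𝓝[<] T, Mcheck f g s < ε := by
    intro ε hε
    by_contra hcon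
    rw [Filter.not_frequently] at hcon
    have hεS : ∀ᶠ s in 𝓝[<] T, ε ≤ Mcheck f g s := by
      filter_upwards [hcon] with s hs
      exact not_lt.mp hs
    have hbddS : BddAbove {a | ∀ᶠ s in 𝓝[<] T, a ≤ Mcheck f g s} := by
      refine ⟨-(Gm 0), fun a ha => ?_⟩
      have hev : ∀ᶠ s in 𝓝[<] T, a ≤ -(Gm 0) := by
        filter_upwards [ha, hnb] with s has hs
        exact has.trans (hMbdd s hs.1 hs.2)
      obtain ⟨s, hs⟩ := hev.exists
      exact hs
    have : ε ≤ Filter.liminf (fun s => Mcheck f g s) (𝓝[<] T) := by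
      rw [Filter.liminf_eq]
      exact le_csSup hbddS hεS
    rw [hM] at this
    linarith
  -- Step 3: combine.
  have key4 : ∀ s, t ≤ s → s < T → Mcheck f g t ^ 2 ≤ Mcheck f g s ^ 2 + 4 * (s - t) := by
    intro s hts hsT
    apply key_mono (ψ := fun u => Mcheck f g u ^ 2) (C := 4) (a := t) (b := s) hts
      ((Mcheck_contOn sol ht hsT).pow 2)
    intro t'' ht''
    obtain ⟨φ, d, h1, h2, h3, h4⟩ := pkg_min sol (lt_of_le_of_lt ht ht''.1)
      (lt_of_le_of_lt ht''.2 hsT)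
    exact ⟨φ, d, h1, h2, fun u hu => h3 u (ht.trans hu.1.le)
      (lt_of_lt_of_le hu.2 (ht''.2.trans hsT.le)), h4⟩
  have final : ∀ δ > 0, Mcheck f g t ^ 2 ≤ 4 * (T - t) + δ := by
    intro δ hδ
    set ε : ℝ := min 1 δ with hε
    have hεpos : 0 < ε := lt_min one_pos hδ
    obtain ⟨s, hs1, hs2⟩ := ((hfreq ε hεpos).and_eventually
      (Ico_mem_nhdsLT_of_mem ⟨htT, le_rfl⟩ : Ico t T ∈ 𝓝[<] T)).exists
    have h1 := key4 s hs2.1 hs2.2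
    have h2 : Mcheck f g s ^ 2 ≤ ε ^ 2 :=
      pow_le_pow_left₀ (Mcheck_pos sol (ht.trans hs2.1) hs2.2).le hs1.le 2
    have h3 : ε ^ 2 ≤ δ := by
      have e1 : ε ≤ 1 := min_le_left _ _
      have e2 : ε ≤ δ := min_le_right _ _
      nlinarith
    have h4 : s - t ≤ T - t := by linarith [hs2.2.le]
    linarith
  have := le_of_forall_pos_le_add final
  linarith
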